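/- For the completed Riemann zeta function Λ, the expression (s−1/2)²·( Λ(s+1/2)³·Λ(2s+1) + 3·Λ(s−1/2)·Λ(s+1/2)·Λ(2s)·Λ(s+3/2) + Λ(s−1/2)²·Λ(s−3/2)·Λ(2s) ) tends to 0 as s → 1/2 along s ≠ 1/2. (Each summand has a pole of order 3 at s = 1/2, but the order −3 and −2 Laurent coefficients cancel, using Λ(−1) = Λ(2); this is the cancellation of the order-3 poles in the split Spin₈ case over ℚ at s = 1/2 with trivial character.) -/

import Mathlib

open Filter Topology

noncomputable def Zf (t : ℂ) : ℂ := t * completedRiemannZeta₀ (1 + t) - t / (1 + t) + 1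
noncomputable def Zg (t : ℂ) : ℂ := t * completedRiemannZeta₀ t - 1 - t / (1 - t)

lemma Zf_eq {t : ℂ} (ht : t ≠ 0) : t * completedRiemannZeta (1 + t) = Zf t := by
  rw [completedRiemannZeta_eq, Zf]
  have h : (1:ℂ) - (1 + t) = -t := by ring
  rw [h]
  have e : t * (1 / -t) = -1 := by field_simp
  linear_combination -e

lemma Zg_eq {t : ℂ} (ht : t ≠ 0) : t * completedRiemannZeta t = Zg t := by
  rw [completedRiemannZeta_eq, Zg]
  have e : t * (1 / t) = 1 := by field_simp
  linear_combination -e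

noncomputable def ZH (t : ℂ) : ℂ :=
  Zf t ^ 3 * completedRiemannZeta (2 + 2*t) +
    3/2 * Zg t * Zf t * Zf (2*t) * completedRiemannZeta (2 + t) +
    1/2 * Zg t ^ 2 * completedRiemannZeta (-1 + t) * Zf (2*t)

lemma Zf_hasDeriv : HasDerivAt Zf (completedRiemannZeta₀ 1 - 1) 0 := by
  have h1 : HasDerivAt (fun t : ℂ => t * completedRiemannZeta₀ (1 + t))
      (completedRiemannZeta₀ 1) 0 := by
    have hc : HasDerivAt (fun t : ℂ => completedRiemannZeta₀ (1 + t))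
        (deriv completedRiemannZeta₀ (1 + 0) * 1) 0 :=
      (differentiable_completedZeta₀ (1 + 0)).hasDerivAt.comp 0 ((hasDerivAt_id 0).const_add 1)
    exact ((hasDerivAt_id (0:ℂ)).mul hc).congr_deriv (by simp)
  have h2 : HasDerivAt (fun t : ℂ => t / (1 + t)) 1 0 := by
    have := (hasDerivAt_id (0:ℂ)).div ((hasDerivAt_id (0:ℂ)).const_add 1) (by norm_num)
    exact this.congr_deriv (by simp)
  exact ((h1.sub h2).add_const 1).congr_deriv (by simp)

lemma Zg_hasDeriv : HasDerivAt Zg (completedRiemannZeta₀ 0 - 1) 0 := by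
  have h1 : HasDerivAt (fun t : ℂ => t * completedRiemannZeta₀ t)
      (completedRiemannZeta₀ 0) 0 := by
    exact ((hasDerivAt_id (0:ℂ)).mul (differentiable_completedZeta₀ 0).hasDerivAt).congr_deriv (by simp)
  have h2 : HasDerivAt (fun t : ℂ => t / (1 - t)) 1 0 := by
    have := (hasDerivAt_id (0:ℂ)).div ((hasDerivAt_id (0:ℂ)).const_sub 1) (by norm_num)
    exact this.congr_deriv (by simp)
  exact ((h1.sub_const 1).sub h2).congr_deriv (by simp)

lemma Zf2_hasDeriv : HasDerivAt (fun t : ℂ => Zf (2*t)) ((completedRiemannZeta₀ 1 - 1) * 2) 0 := by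
  have h0 : (2:ℂ) * 0 = 0 := by norm_num
  have := (h0.symm ▸ Zf_hasDeriv : HasDerivAt Zf (completedRiemannZeta₀ 1 - 1) (2*0)).comp 0
    ((hasDerivAt_id (0:ℂ)).const_mul 2)
  exact this.congr_deriv (by simp)

lemma Zc2_hasDeriv : HasDerivAt (fun t : ℂ => completedRiemannZeta (2 + 2*t))
    (deriv completedRiemannZeta 2 * 2) 0 := by
  have hL2 : DifferentiableAt ℂ completedRiemannZeta 2 :=
    differentiableAt_completedZeta (by norm_num) (by norm_num)
  have e : (2:ℂ) = 2 + 2*0 := by norm_num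
  have houter : HasDerivAt completedRiemannZeta (deriv completedRiemannZeta (2 + 2*0)) (2 + 2*0) :=
    e ▸ hL2.hasDerivAt
  have hinner : HasDerivAt (fun t : ℂ => 2 + 2*t) 2 0 := by
    simpa using ((hasDerivAt_id (0:ℂ)).const_mul 2).const_add 2
  have := houter.comp 0 hinner
  simp only [Function.comp_def] at this
  norm_num at this
  exact this

lemma Zc1_hasDeriv : HasDerivAt (fun t : ℂ => completedRiemannZeta (2 + t))
    (deriv completedRiemannZeta 2) 0 := by
  have hL2 : DifferentiableAt ℂ completedRiemannZeta 2 :=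
    differentiableAt_completedZeta (by norm_num) (by norm_num)
  have e : (2:ℂ) = 2 + 0 := by norm_num
  have houter : HasDerivAt completedRiemannZeta (deriv completedRiemannZeta (2 + 0)) (2 + 0) :=
    e ▸ hL2.hasDerivAt
  have := houter.comp 0 ((hasDerivAt_id (0:ℂ)).const_add 2)
  simp only [Function.comp_def] at this
  norm_num at this
  exact this

lemma Zcm_hasDeriv : HasDerivAt (fun t : ℂ => completedRiemannZeta (-1 + t))
    (deriv completedRiemannZeta (-1)) 0 := by
  have hLm : DifferentiableAt ℂ completedRiemannZeta (-1) :=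
    differentiableAt_completedZeta (by norm_num) (by norm_num)
  have e : (-1:ℂ) = -1 + 0 := by norm_num
  have houter : HasDerivAt completedRiemannZeta (deriv completedRiemannZeta (-1 + 0)) (-1 + 0) :=
    e ▸ hLm.hasDerivAt
  have := houter.comp 0 ((hasDerivAt_id (0:ℂ)).const_add (-1))
  simp only [Function.comp_def] at this
  norm_num at this
  exact this

lemma Lambda_neg_one : completedRiemannZeta (-1) = completedRiemannZeta 2 := by
  have := completedRiemannZeta_one_sub 2
  norm_num at this
  exact this

lemma deriv_Lambda_neg_one : deriv completedRiemannZeta (-1) = -deriv completedRiemannZeta 2 := by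
  have hLm : DifferentiableAt ℂ completedRiemannZeta (-1) :=
    differentiableAt_completedZeta (by norm_num) (by norm_num)
  have e : (-1:ℂ) = 1 - 2 := by norm_num
  have houter : HasDerivAt completedRiemannZeta (deriv completedRiemannZeta (1 - 2)) (1 - 2) :=
    e ▸ hLm.hasDerivAt
  have h := houter.comp 2 ((hasDerivAt_id (2:ℂ)).const_sub 1)
  simp only [Function.comp_def] at h
  have hfun : (fun s : ℂ => completedRiemannZeta (1 - s)) = completedRiemannZeta :=
    funext completedRiemannZeta_one_sub
  rw [hfun] at h
  have := h.deriv
  rw [this]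
  norm_num

lemma Zeta0_zero : completedRiemannZeta₀ 0 = completedRiemannZeta₀ 1 := by
  have := completedRiemannZeta₀_one_sub 1
  norm_num at this
  exact this

lemma ZH_zero : ZH 0 = 0 := by
  simp only [ZH, Zf, Zg]
  norm_num [Lambda_neg_one]
  ring

lemma ZH_hasDeriv : HasDerivAt ZH 0 0 := by
  have t1 := (Zf_hasDeriv.pow 3).mul Zc2_hasDeriv
  have t2 := (((Zg_hasDeriv.const_mul (3/2 : ℂ)).mul Zf_hasDeriv).mul Zf2_hasDeriv).mul Zc1_hasDeriv
  have t3 := ((Zg_hasDeriv.pow 2).const_mul (1/2 : ℂ)).mul Zcm_hasDeriv |>.mul Zf2_hasDeriv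
  have total := (t1.add t2).add t3
  refine total.congr_deriv ?_
  simp only [Pi.mul_apply, Pi.pow_apply, Zf, Zg]
  norm_num
  rw [deriv_Lambda_neg_one, Zeta0_zero]
  ring

lemma key_eq {s : ℂ} (hs : s ≠ 1/2) :
    (s - 1/2)^2 *
      (completedRiemannZeta (s + 1/2)^3 * completedRiemannZeta (2*s + 1) +
        3 * completedRiemannZeta (s - 1/2) * completedRiemannZeta (s + 1/2) *
          completedRiemannZeta (2*s) * completedRiemannZeta (s + 3/2) +
        completedRiemannZeta (s - 1/2)^2 * completedRiemannZeta (s - 3/2) *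
          completedRiemannZeta (2*s)) = ZH (s - 1/2) / (s - 1/2) := by
  obtain ⟨t, rfl⟩ : ∃ t, s = t + 1/2 := ⟨s - 1/2, by ring⟩
  have ht : t ≠ 0 := by
    intro h; exact hs (by rw [h]; ring)
  have h2t : (2:ℂ) * t ≠ 0 := mul_ne_zero two_ne_zero ht
  have r0 : t + 1/2 - 1/2 = t := by ring
  have r1 : t + 1/2 + 1/2 = 1 + t := by ring
  have r2 : 2*(t + 1/2) + 1 = 2 + 2*t := by ring
  have r3 : 2*(t + 1/2) = 1 + 2*t := by ring
  have r4 : t + 1/2 + 3/2 = 2 + t := by ring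
  have r5 : t + 1/2 - 3/2 = -1 + t := by ring
  rw [r0, r1, r2, r3, r4, r5]
  have f1 : completedRiemannZeta (1 + t) = Zf t / t := by
    rw [eq_div_iff ht, mul_comm]; exact Zf_eq ht
  have f2 : completedRiemannZeta t = Zg t / t := by
    rw [eq_div_iff ht, mul_comm]; exact Zg_eq ht
  have f3 : completedRiemannZeta (1 + 2*t) = Zf (2*t) / (2*t) := by
    rw [eq_div_iff h2t, mul_comm]; exact Zf_eq h2t
  rw [f1, f2, f3, ZH, eq_div_iff ht]
  field_simp

theorem completedRiemannZeta_order3_cancellation :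
    Tendsto (fun s : ℂ => (s - 1/2)^2 *
      (completedRiemannZeta (s + 1/2)^3 * completedRiemannZeta (2*s + 1) +
        3 * completedRiemannZeta (s - 1/2) * completedRiemannZeta (s + 1/2) *
          completedRiemannZeta (2*s) * completedRiemannZeta (s + 3/2) +
        completedRiemannZeta (s - 1/2)^2 * completedRiemannZeta (s - 3/2) *
          completedRiemannZeta (2*s)))
      (𝓝[≠] (1/2)) (𝓝 0) := by
  have hslope : Tendsto (fun t : ℂ => ZH t / t) (𝓝[≠] 0) (𝓝 0) := by
    have := hasDerivAt_iff_tendsto_slope.mp ZH_hasDeriv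
    refine this.congr ?_
    intro t
    simp [slope_def_field, ZH_zero]
  have hsub : Tendsto (fun s : ℂ => s - 1/2) (𝓝[≠] (1/2)) (𝓝[≠] (0:ℂ)) := by
    refine tendsto_nhdsWithin_iff.mpr ⟨?_, ?_⟩
    · apply tendsto_nhdsWithin_of_tendsto_nhds
      have : Tendsto (fun s : ℂ => s - 1/2) (𝓝 (1/2)) (𝓝 (1/2 - 1/2)) :=
        (continuous_id.sub continuous_const).tendsto _
      simpa using this
    · filter_upwards [self_mem_nhdsWithin] with s hs
      simp only [Set.mem_compl_iff, Set.mem_singleton_iff] at hs ⊢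
      exact sub_ne_zero.mpr hs
  have hcomp := hslope.comp hsub
  refine hcomp.congr' ?_
  filter_upwards [self_mem_nhdsWithin] with s hs
  simp only [Set.mem_compl_iff, Set.mem_singleton_iff] at hs
  exact (key_eq hs).symm
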